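/- Let n ≥ 2 be an integer, λ > 0, θ > 0, and let V and S be independent nonnegative random variables with E[S] > 0 and E[e^{θV}] < ∞. Define ρ = λ·E[S] and S̃ₑ(θ) = (1 − E[e^{−θS}])/(θ·E[S]) (the Laplace transform of the equilibrium distribution of S). Suppose (θ/n)·E[e^{θV}] + λ·(E[e^{θ·(V−S)⁺}] − E[e^{θV}]) ≥ 0 and ρ·S̃ₑ(θ) > 1/n. Then E[e^{θV}] ≤ n·ρ·S̃ₑ(θ)/(n·ρ·S̃ₑ(θ) − 1), and consequently for every x ≥ 0, P(V ≥ x) ≤ (n·ρ·S̃ₑ(θ)/(n·ρ·S̃ₑ(θ) − 1))·e^{−θx}. -/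

import Mathlib

open MeasureTheory ProbabilityTheory

set_option maxHeartbeats 1000000 in
/-- Abstract form of Lemma 5.2 (state-space collapse of the short server under CARD):
a rate-conservation inequality for `e^{θV}` yields a bound on `E[e^{θV}]` and hence a
Chernoff-type tail bound `P(V ≥ x) ≤ (nρS̃ₑ(θ)/(nρS̃ₑ(θ)−1))·e^{−θx}`. -/
theorem stmt6
    {Ω : Type*} [MeasurableSpace Ω] (μ : Measure Ω) [IsProbabilityMeasure μ]
    (n : ℕ) (hn : 2 ≤ n)
    (lam θ : ℝ) (hlam : 0 < lam) (hθ : 0 < θ)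
    (V S : Ω → ℝ) (hV_meas : Measurable V) (hS_meas : Measurable S)
    (hV_nonneg : ∀ ω, 0 ≤ V ω) (hS_nonneg : ∀ ω, 0 ≤ S ω)
    (hindep : IndepFun V S μ)
    (hS_int : Integrable S μ) (hES_pos : 0 < ∫ ω, S ω ∂μ)
    (hexp : Integrable (fun ω => Real.exp (θ * V ω)) μ)
    (ρ Se : ℝ)
    (hρ : ρ = lam * ∫ ω, S ω ∂μ)
    (hSe : Se = (1 - ∫ ω, Real.exp (-θ * S ω) ∂μ) / (θ * ∫ ω, S ω ∂μ))
    (hRCL : 0 ≤ (θ / n) * (∫ ω, Real.exp (θ * V ω) ∂μ)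
        + lam * ((∫ ω, Real.exp (θ * max (V ω - S ω) 0) ∂μ)
          - ∫ ω, Real.exp (θ * V ω) ∂μ))
    (hdrift : 1 / (n : ℝ) < ρ * Se) :
    (∫ ω, Real.exp (θ * V ω) ∂μ ≤ (n : ℝ) * ρ * Se / ((n : ℝ) * ρ * Se - 1))
      ∧ ∀ x : ℝ, 0 ≤ x →
        (μ {ω | x ≤ V ω}).toReal ≤
          ((n : ℝ) * ρ * Se / ((n : ℝ) * ρ * Se - 1)) * Real.exp (-θ * x) := by
  have hn0 : (0:ℝ) < (n:ℝ) := by positivity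
  set M : ℝ := ∫ ω, Real.exp (θ * V ω) ∂μ with hM
  set E2 : ℝ := ∫ ω, Real.exp (θ * max (V ω - S ω) 0) ∂μ with hE2
  set q : ℝ := 1 - ∫ ω, Real.exp (-θ * S ω) ∂μ with hq
  set A : ℝ := (n : ℝ) * ρ * Se with hA
  -- A > 1
  have hA1 : 1 < A := by
    have := (div_lt_iff₀ hn0).mp hdrift
    rw [hA]; nlinarith
  -- ρ * Se = lam * q / θ
  have hρSe : ρ * Se = lam * q / θ := by
    rw [hρ, hSe, hq]
    field_simp
  -- auxiliary functions
  set X : Ω → ℝ := fun ω => Real.exp (θ * V ω) - 1 with hX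
  set Y : Ω → ℝ := fun ω => 1 - Real.exp (-θ * S ω) with hY
  have hXmeas : Measurable X := by
    exact (Real.measurable_exp.comp (measurable_const.mul hV_meas)).sub measurable_const
  have hYmeas : Measurable Y := by
    exact measurable_const.sub (Real.measurable_exp.comp (measurable_const.mul hS_meas))
  have hXYindep : IndepFun X Y μ := by
    exact hindep.comp (φ := fun v => Real.exp (θ * v) - 1)
      (ψ := fun s => 1 - Real.exp (-θ * s))
      ((Real.measurable_exp.comp (measurable_const.mul measurable_id)).sub measurable_const)
      (measurable_const.sub (Real.measurable_exp.comp (measurable_const.mul measurable_id)))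
  have hXint : Integrable X μ := hexp.sub (integrable_const 1)
  have hYint : Integrable Y μ := by
    refine (integrable_const (1:ℝ)).mono' hYmeas.aestronglyMeasurable (ae_of_all _ fun ω => ?_)
    have h1 : Real.exp (-θ * S ω) ≤ 1 := by
      rw [Real.exp_le_one_iff]
      nlinarith [hS_nonneg ω]
    have h2 : 0 < Real.exp (-θ * S ω) := Real.exp_pos _
    rw [hY]; simp only [Real.norm_eq_abs, norm_one]
    rw [abs_le]; constructor <;> nlinarith
  -- exp(θ max(V-S,0)) is integrable
  have hmaxmeas : Measurable fun ω => Real.exp (θ * max (V ω - S ω) 0) :=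
    Real.measurable_exp.comp (measurable_const.mul ((hV_meas.sub hS_meas).max measurable_const))
  have hexp2 : Integrable (fun ω => Real.exp (θ * max (V ω - S ω) 0)) μ := by
    refine hexp.mono' hmaxmeas.aestronglyMeasurable (ae_of_all _ fun ω => ?_)
    rw [Real.norm_eq_abs, abs_of_pos (Real.exp_pos _)]
    apply Real.exp_le_exp.mpr
    apply mul_le_mul_of_nonneg_left _ hθ.le
    exact max_le (by nlinarith [hS_nonneg ω]) (hV_nonneg ω)
  -- integral of X
  have hIX : ∫ ω, X ω ∂μ = M - 1 := by
    rw [hX]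
    rw [integral_sub hexp (integrable_const 1)]
    simp [hM]
  have hexpS_int : Integrable (fun ω => Real.exp (-θ * S ω)) μ := by
    refine (integrable_const (1:ℝ)).mono'
      (Real.measurable_exp.comp (measurable_const.mul hS_meas)).aestronglyMeasurable
      (ae_of_all _ fun ω => ?_)
    rw [Real.norm_eq_abs, abs_of_pos (Real.exp_pos _), Real.exp_le_one_iff]
    nlinarith [hS_nonneg ω]
  have hIY : ∫ ω, Y ω ∂μ = q := by
    rw [hY, integral_sub (integrable_const 1) hexpS_int]
    simp [hq]
  -- product formula
  have hprod : ∫ ω, X ω * Y ω ∂μ = (M - 1) * q := by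
    have := hXYindep.integral_mul_eq_mul_integral hXint.aestronglyMeasurable hYint.aestronglyMeasurable
    rw [← hIX, ← hIY, ← this]; rfl
  -- pointwise key inequality
  have hpt : ∀ ω, X ω * Y ω ≤ Real.exp (θ * V ω) - Real.exp (θ * max (V ω - S ω) 0) := by
    intro ω
    rcases le_or_gt (S ω) (V ω) with h | h
    · have hmax : max (V ω - S ω) 0 = V ω - S ω := max_eq_left (by linarith)
      simp only [hX, hY, hmax]
      have he : Real.exp (θ * (V ω - S ω)) = Real.exp (θ * V ω) * Real.exp (-θ * S ω) := by
        rw [← Real.exp_add]; ring_nf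
      have h1 : Real.exp (-θ * S ω) ≤ 1 := by
        rw [Real.exp_le_one_iff]; nlinarith [hS_nonneg ω]
      have h2 : (0:ℝ) < Real.exp (-θ * S ω) := Real.exp_pos _
      have h3 : (0:ℝ) < Real.exp (θ * V ω) := Real.exp_pos _
      rw [he]; nlinarith
    · have hmax : max (V ω - S ω) 0 = 0 := max_eq_right (by linarith)
      simp only [hX, hY, hmax, mul_zero, Real.exp_zero]
      have h1 : (1:ℝ) ≤ Real.exp (θ * V ω) := by
        rw [Real.one_le_exp_iff]; exact mul_nonneg hθ.le (hV_nonneg ω)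
      have h2 : (0:ℝ) < Real.exp (-θ * S ω) := Real.exp_pos _
      have h3 : Real.exp (-θ * S ω) ≤ 1 := by
        rw [Real.exp_le_one_iff]; nlinarith [hS_nonneg ω]
      nlinarith
  -- integrate the key inequality
  have hYbdd : ∃ C, ∀ ω, ‖Y ω‖ ≤ C := by
    refine ⟨1, fun ω => ?_⟩
    have h1 : Real.exp (-θ * S ω) ≤ 1 := by
      rw [Real.exp_le_one_iff]; nlinarith [hS_nonneg ω]
    have h2 : (0:ℝ) < Real.exp (-θ * S ω) := Real.exp_pos _
    simp only [hY, Real.norm_eq_abs]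
    rw [abs_le]; constructor <;> nlinarith
  have hYX : Integrable (fun ω => Y ω * X ω) μ :=
    Integrable.bdd_mul hXint hYmeas.aestronglyMeasurable (ae_of_all _ hYbdd.choose_spec)
  have hXYint : Integrable (fun ω => X ω * Y ω) μ :=
    hYX.congr (ae_of_all _ fun ω => mul_comm _ _)
  have hkey : (M - 1) * q ≤ M - E2 := by
    rw [← hprod]
    rw [hM, hE2, ← integral_sub hexp hexp2]
    exact integral_mono hXYint (hexp.sub hexp2) hpt
  -- from RCL: lam * (M - E2) ≤ (θ/n) * M
  have hRCL' : lam * (M - E2) ≤ (θ / n) * M := by nlinarith [hRCL]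
  -- combine: A * (M - 1) ≤ M
  have hAM : A * (M - 1) ≤ M := by
    have h1 : lam * ((M - 1) * q) ≤ (θ / n) * M :=
      le_trans (by nlinarith [hkey]) hRCL'
    have hAeq : A = (n : ℝ) * (lam * q / θ) := by rw [hA, mul_assoc, hρSe]
    rw [hAeq]
    have h2 : lam * ((M - 1) * q) * n ≤ θ * M := (le_div_iff₀ hn0).mp (by rw [div_mul_eq_mul_div] at h1; exact h1)
    have h4 : (n:ℝ) * (lam * q / θ) * (M - 1) = (lam * ((M - 1) * q) * n) / θ := by
      field_simp
    rw [h4, div_le_iff₀ hθ]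
    nlinarith
  have hMbound : M ≤ A / (A - 1) := by
    rw [le_div_iff₀ (by linarith : (0:ℝ) < A - 1)]
    nlinarith
  refine ⟨hMbound, fun x hx => ?_⟩
  have hM0 : 0 ≤ (μ {ω | x ≤ V ω}).toReal := ENNReal.toReal_nonneg
  have hmarkov := mul_meas_ge_le_integral_of_nonneg
    (ae_of_all μ fun ω => (Real.exp_pos (θ * V ω)).le) hexp (Real.exp (θ * x))
  have hset : {ω | Real.exp (θ * x) ≤ Real.exp (θ * V ω)} = {ω | x ≤ V ω} := by
    ext ω
    simp only [Set.mem_setOf_eq, Real.exp_le_exp]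
    exact ⟨fun h => le_of_mul_le_mul_left h hθ, fun h => mul_le_mul_of_nonneg_left h hθ.le⟩
  rw [hset] at hmarkov
  have hA0 : 0 ≤ A / (A - 1) := div_nonneg (by linarith) (by linarith)
  have hxexp : Real.exp (-θ * x) = (Real.exp (θ * x))⁻¹ := by
    rw [← Real.exp_neg]; ring_nf
  rw [hxexp, ← div_eq_mul_inv, le_div_iff₀ (Real.exp_pos _)]
  calc (μ {ω | x ≤ V ω}).toReal * Real.exp (θ * x)
      = Real.exp (θ * x) * (μ {ω | x ≤ V ω}).toReal := mul_comm _ _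
    _ ≤ M := hmarkov
    _ ≤ A / (A - 1) := hMbound
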